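/- (Strong duality value equality under the certificate conditions) Under the hypotheses of the Main Proposition — X_r = Σ_{ℓ=1}^L α_ℓ u w(r_ℓ)^H (‖u‖₂ = 1, α_ℓ ≠ 0), X_c = Σ_{q=1}^Q α'_q v w(c_q)^H (‖v‖₂ = 1, α'_q ≠ 0), y = B_r(X_r) + B_c(X_c), and q ∈ ℂ^D with f_r(r_ℓ) = sign(α_ℓ)·u for all ℓ, f_c(c_q) = sign(α'_q)·v for all q, ‖f_r(r)‖₂ ≤ 1 and ‖f_c(c)‖₂ ≤ 1 for all r, c ∈ [0,1]^3 — one has ⟨q, y⟩_ℝ = ‖X_r‖_{A_r} + ‖X_c‖_{A_c}. -/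

import Mathlib

open scoped BigOperators
open Matrix

noncomputable section

/-- Index set of size `D = Nr * M * P` with `M = 2N+1`, ordered as `p ⊗ d ⊗ b`. -/
abbrev Dix (Nr P N : ℕ) := Fin P × Fin (2 * N + 1) × Fin Nr

/-- Spatial steering vector `b(β) ∈ ℂ^{Nr}`, `b(β)[k] = exp(-2πi k β)`. -/
def bVec (Nr : ℕ) (β : ℝ) : Fin Nr → ℂ :=
  fun k => Complex.exp (-(2 * Real.pi * Complex.I * ((k : ℕ) : ℂ) * (β : ℂ)))

/-- Delay steering vector `d(τ) ∈ ℂ^{M}`, `M = 2N+1`, entries `exp(-2πi n τ)`, `n = -N,…,N`. -/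
def dVec (N : ℕ) (τ : ℝ) : Fin (2 * N + 1) → ℂ :=
  fun n => Complex.exp (-(2 * Real.pi * Complex.I * ((((n : ℕ) : ℤ) - (N : ℤ) : ℤ) : ℂ) * (τ : ℂ)))

/-- Doppler steering vector `p(ν) ∈ ℂ^{P}`, `p(ν)[p] = exp(-2πi p ν)`. -/
def pVec (P : ℕ) (ν : ℝ) : Fin P → ℂ :=
  fun p => Complex.exp (-(2 * Real.pi * Complex.I * ((p : ℕ) : ℂ) * (ν : ℂ)))

/-- `w(r) = p(ν) ⊗ d(τ) ⊗ b(β) ∈ ℂ^D`, for `r = (τ, ν, β)`. -/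
def wVec (Nr P N : ℕ) (r : ℝ × ℝ × ℝ) : Dix Nr P N → ℂ :=
  fun j => pVec P r.2.1 j.1 * dVec N r.1 j.2.1 * bVec Nr r.2.2 j.2.2

/-- The parameter cube `[0,1]^3`. -/
def cube : Set (ℝ × ℝ × ℝ) := Set.Icc ((0, 0, 0) : ℝ × ℝ × ℝ) (1, 1, 1)

/-- Euclidean (ℓ₂) norm of a complex vector. -/
def norm2 {ι : Type*} [Fintype ι] (u : ι → ℂ) : ℝ := Real.sqrt (∑ i, ‖u i‖ ^ 2)

/-- Atom `u w^H ∈ ℂ^{K×D}`. -/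
def atom {ι : Type*} (K : ℕ) (u : Fin K → ℂ) (w : ι → ℂ) : Matrix (Fin K) ι ℂ :=
  fun k j => u k * starRingEnd ℂ (w j)

/-- `sign(c) = c / |c|`. -/
def csign (c : ℂ) : ℂ := c / ((‖c‖ : ℝ) : ℂ)

/-- Atomic norm of `X ∈ ℂ^{K×D}` with respect to the atoms `u w(r)^H`. -/
def atomicNorm (Nr P N K : ℕ) (X : Matrix (Fin K) (Dix Nr P N) ℂ) : ℝ :=
  sInf { t | ∃ (L : ℕ) (α : Fin L → ℂ) (r : Fin L → ℝ × ℝ × ℝ) (u : Fin K → ℂ),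
    (∀ ℓ, r ℓ ∈ cube) ∧ norm2 u = 1 ∧
    X = ∑ ℓ, α ℓ • atom K u (wVec Nr P N (r ℓ)) ∧
    t = ∑ ℓ, ‖α ℓ‖ }

/-- Dual atomic norm `‖Y‖*_A = sup { |Tr(A^H Y)| : A an atom }`. -/
def dualAtomicNorm (Nr P N K : ℕ) (Y : Matrix (Fin K) (Dix Nr P N) ℂ) : ℝ :=
  sSup { t | ∃ (rr : ℝ × ℝ × ℝ) (u : Fin K → ℂ), rr ∈ cube ∧ norm2 u = 1 ∧
    t = ‖Matrix.trace ((atom K u (wVec Nr P N rr))ᴴ * Y)‖ }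

/-- `X` admits at least one atomic decomposition. -/
def hasAtomicDecomp (Nr P N K : ℕ) (X : Matrix (Fin K) (Dix Nr P N) ℂ) : Prop :=
  ∃ (L : ℕ) (α : Fin L → ℂ) (r : Fin L → ℝ × ℝ × ℝ) (u : Fin K → ℂ),
    (∀ ℓ, r ℓ ∈ cube) ∧ norm2 u = 1 ∧
    X = ∑ ℓ, α ℓ • atom K u (wVec Nr P N (r ℓ))

/-- The linear operator `B(X)[j] = Tr(G_j X)`. -/
def Bop {ι : Type*} [Fintype ι] {K : ℕ} (G : ι → Matrix ι (Fin K) ℂ)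
    (X : Matrix (Fin K) ι ℂ) : ι → ℂ := fun j => Matrix.trace (G j * X)

/-- The adjoint operator `B*(q) = Σ_j q[j] G_j^H`. -/
def Bstar {ι : Type*} [Fintype ι] {K : ℕ} (G : ι → Matrix ι (Fin K) ℂ)
    (q : ι → ℂ) : Matrix (Fin K) ι ℂ := ∑ j, q j • (G j)ᴴ

/-- Real inner product `⟨q, y⟩_ℝ = Re(y^H q)`. -/
def rInner {ι : Type*} [Fintype ι] (q y : ι → ℂ) : ℝ :=
  (∑ j, starRingEnd ℂ (y j) * q j).re

lemma dot_abs_le {ι : Type*} [Fintype ι] (u v : ι → ℂ) :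
    ‖∑ i, starRingEnd ℂ (u i) * v i‖ ≤ norm2 u * norm2 v := by
  let x : EuclideanSpace ℂ ι := WithLp.toLp 2 u
  let y : EuclideanSpace ℂ ι := WithLp.toLp 2 v
  have h := norm_inner_le_norm (𝕜 := ℂ) x y
  simpa [x, y, PiLp.inner_apply, RCLike.inner_apply, EuclideanSpace.norm_eq, norm2, mul_comm] using h

lemma sum3_comm {β γ δ M : Type*} [AddCommMonoid M] [Fintype β] [Fintype γ] [Fintype δ]
    (f : β → γ → δ → M) :
    ∑ a, ∑ b, ∑ c, f a b c = ∑ c, ∑ b, ∑ a, f a b c := by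
  rw [Finset.sum_comm]
  rw [show (∑ b, ∑ a, ∑ c, f a b c) = ∑ b, ∑ c, ∑ a, f a b c from
    Finset.sum_congr rfl fun b _ => Finset.sum_comm]
  exact Finset.sum_comm

lemma pair_atom {ι : Type*} [Fintype ι] {K : ℕ} (G : ι → Matrix ι (Fin K) ℂ)
    (q : ι → ℂ) (u : Fin K → ℂ) (w : ι → ℂ) :
    ∑ j, starRingEnd ℂ (Bop G (atom K u w) j) * q j
      = ∑ k, starRingEnd ℂ (u k) * (Bstar G q *ᵥ w) k := by
  simp only [Bop, Bstar, atom, Matrix.trace, Matrix.diag, Matrix.mul_apply,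
    Matrix.mulVec, dotProduct, Matrix.sum_apply, Matrix.smul_apply,
    Matrix.conjTranspose_apply, map_sum, _root_.map_mul, smul_eq_mul,
    Complex.conj_conj, Finset.mul_sum, Finset.sum_mul]
  rw [sum3_comm]
  refine Finset.sum_congr rfl fun k _ => ?_
  refine Finset.sum_congr rfl fun i _ => ?_
  refine Finset.sum_congr rfl fun j _ => ?_
  simp only [RCLike.star_def]
  ring
lemma pair_decomp {ι : Type*} [Fintype ι] {K L : ℕ} (G : ι → Matrix ι (Fin K) ℂ)
    (q : ι → ℂ) (α : Fin L → ℂ) (u : Fin K → ℂ) (w : Fin L → ι → ℂ) :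
    ∑ j, starRingEnd ℂ (Bop G (∑ ℓ, α ℓ • atom K u (w ℓ)) j) * q j
      = ∑ ℓ, starRingEnd ℂ (α ℓ) *
          ∑ k, starRingEnd ℂ (u k) * (Bstar G q *ᵥ w ℓ) k := by
  have hB : ∀ j, Bop G (∑ ℓ, α ℓ • atom K u (w ℓ)) j
      = ∑ ℓ, α ℓ * Bop G (atom K u (w ℓ)) j := by
    intro j
    simp [Bop, Matrix.mul_sum, Matrix.mul_smul, Matrix.trace_sum, Matrix.trace_smul,
      smul_eq_mul]
  simp only [hB, map_sum, _root_.map_mul, Finset.sum_mul]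
  rw [Finset.sum_comm]
  refine Finset.sum_congr rfl fun ℓ _ => ?_
  rw [← pair_atom G q u (w ℓ), Finset.mul_sum]
  refine Finset.sum_congr rfl fun j _ => ?_
  ring

lemma sum_conj_mul_self {K : ℕ} (u : Fin K → ℂ) (hu : norm2 u = 1) :
    ∑ k, starRingEnd ℂ (u k) * u k = 1 := by
  have h : ∑ k, ‖u k‖ ^ 2 = 1 := by
    have := hu
    unfold norm2 at this
    have hnn : 0 ≤ ∑ k, ‖u k‖ ^ 2 := Finset.sum_nonneg fun k _ => sq_nonneg _
    nlinarith [Real.sq_sqrt hnn, this]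
  have : ∀ k, starRingEnd ℂ (u k) * u k = ((‖u k‖ ^ 2 : ℝ) : ℂ) := by
    intro k
    rw [mul_comm, Complex.mul_conj]
    rw [Complex.normSq_eq_norm_sq]
  rw [Finset.sum_congr rfl fun k _ => this k]
  push_cast [h]
  norm_cast

lemma conj_mul_csign {a : ℂ} (ha : a ≠ 0) :
    starRingEnd ℂ a * csign a = ((‖a‖ : ℝ) : ℂ) := by
  have h0 : (‖a‖ : ℂ) ≠ 0 := by
    exact_mod_cast norm_ne_zero_iff.mpr ha
  rw [csign]
  field_simp
  rw [mul_comm, Complex.mul_conj, Complex.normSq_eq_norm_sq]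
  push_cast
  ring
lemma pair_value {ι : Type*} [Fintype ι] {K L : ℕ} (G : ι → Matrix ι (Fin K) ℂ)
    (q : ι → ℂ) (α : Fin L → ℂ) (u : Fin K → ℂ) (w : Fin L → ι → ℂ)
    (hα : ∀ ℓ, α ℓ ≠ 0) (hu : norm2 u = 1)
    (hf : ∀ ℓ, Bstar G q *ᵥ w ℓ = csign (α ℓ) • u) :
    ∑ j, starRingEnd ℂ (Bop G (∑ ℓ, α ℓ • atom K u (w ℓ)) j) * q j
      = (((∑ ℓ, ‖α ℓ‖) : ℝ) : ℂ) := by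
  rw [pair_decomp]
  push_cast
  refine Finset.sum_congr rfl fun ℓ _ => ?_
  rw [hf ℓ]
  simp only [Pi.smul_apply, smul_eq_mul]
  have : ∑ k, starRingEnd ℂ (u k) * (csign (α ℓ) * u k)
      = csign (α ℓ) * ∑ k, starRingEnd ℂ (u k) * u k := by
    rw [Finset.mul_sum]; exact Finset.sum_congr rfl fun k _ => by ring
  rw [this, sum_conj_mul_self u hu, mul_one, conj_mul_csign (hα ℓ)]

lemma pair_bound {ι : Type*} [Fintype ι] {K L : ℕ} (G : ι → Matrix ι (Fin K) ℂ)
    (q : ι → ℂ) (β : Fin L → ℂ) (u : Fin K → ℂ) (w : Fin L → ι → ℂ)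
    (hu : norm2 u = 1) (hb : ∀ ℓ, norm2 (Bstar G q *ᵥ w ℓ) ≤ 1) :
    (∑ j, starRingEnd ℂ (Bop G (∑ ℓ, β ℓ • atom K u (w ℓ)) j) * q j).re
      ≤ ∑ ℓ, ‖β ℓ‖ := by
  rw [pair_decomp]
  calc (∑ ℓ, starRingEnd ℂ (β ℓ) * ∑ k, starRingEnd ℂ (u k) * (Bstar G q *ᵥ w ℓ) k).re
      ≤ ‖∑ ℓ, starRingEnd ℂ (β ℓ) *
          ∑ k, starRingEnd ℂ (u k) * (Bstar G q *ᵥ w ℓ) k‖ := Complex.re_le_norm _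
    _ ≤ ∑ ℓ, ‖starRingEnd ℂ (β ℓ) *
          ∑ k, starRingEnd ℂ (u k) * (Bstar G q *ᵥ w ℓ) k‖ :=
        norm_sum_le _ _
    _ ≤ ∑ ℓ, ‖β ℓ‖ := by
        refine Finset.sum_le_sum fun ℓ _ => ?_
        rw [norm_mul, Complex.norm_conj]
        have h1 : ‖∑ k, starRingEnd ℂ (u k) * (Bstar G q *ᵥ w ℓ) k‖
            ≤ norm2 u * norm2 (Bstar G q *ᵥ w ℓ) := dot_abs_le _ _
        have h2 : norm2 u * norm2 (Bstar G q *ᵥ w ℓ) ≤ 1 := by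
          rw [hu, one_mul]; exact hb ℓ
        calc ‖β ℓ‖ * ‖∑ k, starRingEnd ℂ (u k) * (Bstar G q *ᵥ w ℓ) k‖
            ≤ ‖β ℓ‖ * 1 :=
              mul_le_mul_of_nonneg_left (h1.trans h2) (norm_nonneg _)
          _ = ‖β ℓ‖ := mul_one _
lemma atomicNorm_eq_sum {Nr P N K : ℕ} (G : Dix Nr P N → Matrix (Dix Nr P N) (Fin K) ℂ)
    (q : Dix Nr P N → ℂ) {L : ℕ} (α : Fin L → ℂ) (r : Fin L → ℝ × ℝ × ℝ) (u : Fin K → ℂ)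
    (hα : ∀ ℓ, α ℓ ≠ 0) (hr : ∀ ℓ, r ℓ ∈ cube) (hu : norm2 u = 1)
    (X : Matrix (Fin K) (Dix Nr P N) ℂ)
    (hX : X = ∑ ℓ, α ℓ • atom K u (wVec Nr P N (r ℓ)))
    (hf : ∀ ℓ, Bstar G q *ᵥ wVec Nr P N (r ℓ) = csign (α ℓ) • u)
    (hfb : ∀ rr ∈ cube, norm2 (Bstar G q *ᵥ wVec Nr P N rr) ≤ 1) :
    atomicNorm Nr P N K X = ∑ ℓ, ‖α ℓ‖ := by
  have hval : ∑ j, starRingEnd ℂ (Bop G X j) * q j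
      = (((∑ ℓ, ‖α ℓ‖) : ℝ) : ℂ) := by
    rw [hX]; exact pair_value G q α u _ hα hu hf
  have hmem : (∑ ℓ, ‖α ℓ‖) ∈
      { t | ∃ (L : ℕ) (α : Fin L → ℂ) (r : Fin L → ℝ × ℝ × ℝ) (u : Fin K → ℂ),
        (∀ ℓ, r ℓ ∈ cube) ∧ norm2 u = 1 ∧
        X = ∑ ℓ, α ℓ • atom K u (wVec Nr P N (r ℓ)) ∧
        t = ∑ ℓ, ‖α ℓ‖ } := ⟨L, α, r, u, hr, hu, hX, rfl⟩
  have hlb : ∀ t ∈ { t | ∃ (L : ℕ) (α : Fin L → ℂ) (r : Fin L → ℝ × ℝ × ℝ) (u : Fin K → ℂ),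
        (∀ ℓ, r ℓ ∈ cube) ∧ norm2 u = 1 ∧
        X = ∑ ℓ, α ℓ • atom K u (wVec Nr P N (r ℓ)) ∧
        t = ∑ ℓ, ‖α ℓ‖ }, (∑ ℓ, ‖α ℓ‖) ≤ t := by
    rintro t ⟨L', β, r', u', hr', hu', hX', rfl⟩
    have h1 : (∑ j, starRingEnd ℂ (Bop G X j) * q j).re = ∑ ℓ, ‖α ℓ‖ := by
      rw [hval, Complex.ofReal_re]
    have h2 : (∑ j, starRingEnd ℂ (Bop G X j) * q j).re ≤ ∑ ℓ, ‖β ℓ‖ := by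
      rw [hX']
      exact pair_bound G q β u' _ hu' fun ℓ => hfb (r' ℓ) (hr' ℓ)
    linarith
  unfold atomicNorm
  exact le_antisymm
    (csInf_le ⟨∑ ℓ, ‖α ℓ‖, hlb⟩ hmem)
    (le_csInf ⟨_, hmem⟩ hlb)

/-- **Strong duality value equality under the certificate conditions.**
With sign interpolation at the true parameters and `‖f_r‖₂, ‖f_c‖₂ ≤ 1` on `[0,1]^3`,
the dual objective equals `‖X_r‖_{A_r} + ‖X_c‖_{A_c}`. -/
theorem strong_duality_value (Nr P N K K' : ℕ)
    (hNr : 0 < Nr) (hP : 0 < P) (hK : 0 < K) (hK' : 0 < K')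
    (G : Dix Nr P N → Matrix (Dix Nr P N) (Fin K) ℂ)
    (A : Dix Nr P N → Matrix (Dix Nr P N) (Fin K') ℂ)
    (L : ℕ) (α : Fin L → ℂ) (r : Fin L → ℝ × ℝ × ℝ) (u : Fin K → ℂ)
    (hα : ∀ ℓ, α ℓ ≠ 0) (hr : ∀ ℓ, r ℓ ∈ cube) (hu : norm2 u = 1)
    (Q : ℕ) (α' : Fin Q → ℂ) (c : Fin Q → ℝ × ℝ × ℝ) (v : Fin K' → ℂ)
    (hα' : ∀ qq, α' qq ≠ 0) (hc : ∀ qq, c qq ∈ cube) (hv : norm2 v = 1)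
    (Xr : Matrix (Fin K) (Dix Nr P N) ℂ)
    (hXr : Xr = ∑ ℓ, α ℓ • atom K u (wVec Nr P N (r ℓ)))
    (Xc : Matrix (Fin K') (Dix Nr P N) ℂ)
    (hXc : Xc = ∑ qq, α' qq • atom K' v (wVec Nr P N (c qq)))
    (y : Dix Nr P N → ℂ)
    (hy : y = fun j => Bop G Xr j + Bop A Xc j)
    (q : Dix Nr P N → ℂ)
    (hfr : ∀ ℓ, Bstar G q *ᵥ wVec Nr P N (r ℓ) = csign (α ℓ) • u)
    (hfc : ∀ qq, Bstar A q *ᵥ wVec Nr P N (c qq) = csign (α' qq) • v)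
    (hfrb : ∀ rr ∈ cube, norm2 (Bstar G q *ᵥ wVec Nr P N rr) ≤ 1)
    (hfcb : ∀ cc ∈ cube, norm2 (Bstar A q *ᵥ wVec Nr P N cc) ≤ 1) :
    rInner q y = atomicNorm Nr P N K Xr + atomicNorm Nr P N K' Xc := by
  have hvr : ∑ j, starRingEnd ℂ (Bop G Xr j) * q j
      = (((∑ ℓ, ‖α ℓ‖) : ℝ) : ℂ) := by
    rw [hXr]; exact pair_value G q α u _ hα hu hfr
  have hvc : ∑ j, starRingEnd ℂ (Bop A Xc j) * q j
      = (((∑ qq, ‖α' qq‖) : ℝ) : ℂ) := by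
    rw [hXc]; exact pair_value A q α' v _ hα' hv hfc
  have hsplit : rInner q y = (∑ j, starRingEnd ℂ (Bop G Xr j) * q j).re
      + (∑ j, starRingEnd ℂ (Bop A Xc j) * q j).re := by
    unfold rInner
    rw [hy]
    rw [← Complex.add_re, ← Finset.sum_add_distrib]
    congr 1
    refine Finset.sum_congr rfl fun j _ => ?_
    simp [map_add]
    ring
  rw [hsplit, hvr, hvc, Complex.ofReal_re, Complex.ofReal_re,
    atomicNorm_eq_sum G q α r u hα hr hu Xr hXr hfr hfrb,
    atomicNorm_eq_sum A q α' c v hα' hc hv Xc hXc hfc hfcb]
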